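/- Let k be a field of characteristic 2 and A = k[[t,w]]/(w + (1+t)w² + t³). The assignments σ(t) = (t+w)/(1+t) and σ(w) = w/(1+t) define a continuous k-algebra endomorphism of A, i.e., the relation w + (1+t)w² + t³ is sent to a multiple of itself (in fact to zero in A). -/

import Mathlib

open PowerSeries
noncomputable section
noncomputable section

/-- The product (= `t`-adic) topology on `k[[t]]`, `k` being discrete. -/
def psTop (k : Type*) : TopologicalSpace (PowerSeries k) :=
  letI : TopologicalSpace k := ⊥
  inferInstanceAs (TopologicalSpace ((Unit →₀ ℕ) → k))

/-- The product (= `(t,w)`-adic) topology on `k[[t,w]] = k[[t]][[w]]`, `k` being discrete. -/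
def ps2Top (k : Type*) : TopologicalSpace (PowerSeries (PowerSeries k)) :=
  letI := psTop k
  inferInstanceAs (TopologicalSpace ((Unit →₀ ℕ) → PowerSeries k))

variable (k : Type*) [Field k]

/-- The relation `w + (1+t)w² + t³` in `k[[t,w]] = k[[t]][[w]]` (the variable `X` of the
outer ring is `w`, and `t` is the image of the variable of the inner ring `k[[t]]`). -/
def relF : PowerSeries (PowerSeries k) :=
  X + (1 + PowerSeries.C (R := PowerSeries k) X) * X ^ 2 + PowerSeries.C (R := PowerSeries k) X ^ 3

/-- The ring `A = k[[t,w]]/(w + (1+t)w² + t³)`. -/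
def NgA := PowerSeries (PowerSeries k) ⧸ Ideal.span {relF k}

instance : CommRing (NgA k) := Ideal.Quotient.commRing _
instance : Algebra k (NgA k) := Ideal.Quotient.algebra k

/-- The quotient topology on `A`. -/
def aTop : TopologicalSpace (NgA k) :=
  (ps2Top k).coinduced (Ideal.Quotient.mk (Ideal.span {relF k}))

/-- The image of `t` in `A`. -/
def tA : NgA k := Ideal.Quotient.mk _ (PowerSeries.C (R := PowerSeries k) X)

/-- The image of `w` in `A`. -/
def wA : NgA k := Ideal.Quotient.mk _ (X : PowerSeries (PowerSeries k))

/-- The power series `s = Σ_{i≥0} (t³+t⁴)^{2^i}` in `k[[t]]`, given coefficientwise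
(the term of index `i` has `t`-adic order `3·2^i > n` for `i > n`). -/
def paperS : PowerSeries k :=
  PowerSeries.mk fun n =>
    ∑ i ∈ Finset.range (n + 1), PowerSeries.coeff (R := k) n ((X ^ 3 + X ^ 4) ^ 2 ^ i)



section Aux

variable {K : Type*} [Field K]

lemma key_identity {S : Type*} [CommRing S] (two : (2:S) = 0) (x y u : S)
    (hu : (1+x)*u = 1) :
    y*u + (1+(x+y)*u)*(y*u)^2 + ((x+y)*u)^3 = u^3 * (y + (1+x)*y^2 + x^3) := by
  linear_combination (y*u + y*u^2 + y^2*u^2 + x*y*u^2) * hu +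
    (y*u - y*u^3 + y^2*u^2 - y^2*u^3 + y^3*u^3 - x*y*u^3 + x*y^2*u^3 + x^2*y*u^3) * two

def cc (d e : ℕ) (f : PowerSeries (PowerSeries K)) : K :=
  coeff (R := K) e (coeff (R := PowerSeries K) d f)

lemma cc_add (d e : ℕ) (f g : PowerSeries (PowerSeries K)) :
    cc d e (f + g) = cc d e f + cc d e g := by simp [cc]

lemma cc_sub (d e : ℕ) (f g : PowerSeries (PowerSeries K)) :
    cc d e (f - g) = cc d e f - cc d e g := by simp [cc]

lemma cc_sum {ι : Type*} (s : Finset ι) (F : ι → PowerSeries (PowerSeries K)) (d e : ℕ) :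
    cc d e (∑ i ∈ s, F i) = ∑ i ∈ s, cc d e (F i) := by
  simp [cc]

lemma cc_mul (d e : ℕ) (f g : PowerSeries (PowerSeries K)) :
    cc d e (f * g) = ∑ p ∈ Finset.HasAntidiagonal.antidiagonal d, ∑ q ∈ Finset.HasAntidiagonal.antidiagonal e,
      cc p.1 q.1 f * cc p.2 q.2 g := by
  unfold cc
  rw [PowerSeries.coeff_mul, map_sum]
  exact Finset.sum_congr rfl fun p _ => PowerSeries.coeff_mul _ _ _

lemma B_ext {f g : PowerSeries (PowerSeries K)} (h : ∀ d e, cc d e f = cc d e g) :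
    f = g :=
  PowerSeries.ext fun d => PowerSeries.ext fun e => h d e

/-- `f` lies in the `n`-th power of the maximal ideal (total-degree version). -/
def Imem (n : ℕ) (f : PowerSeries (PowerSeries K)) : Prop :=
  ∀ d e, d + e < n → cc d e f = 0

lemma Imem_zero (f : PowerSeries (PowerSeries K)) : Imem 0 f := fun _ _ h => by omega

lemma Imem_mono {m n : ℕ} (h : m ≤ n) {f : PowerSeries (PowerSeries K)} (hf : Imem n f) :
    Imem m f := fun d e hde => hf d e (lt_of_lt_of_le hde h)

lemma Imem_add {n : ℕ} {f g : PowerSeries (PowerSeries K)} (hf : Imem n f) (hg : Imem n g) :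
    Imem n (f + g) := fun d e hde => by rw [cc_add, hf d e hde, hg d e hde, add_zero]

lemma Imem_sum {ι : Type*} {n : ℕ} (s : Finset ι) (F : ι → PowerSeries (PowerSeries K))
    (h : ∀ i ∈ s, Imem n (F i)) : Imem n (∑ i ∈ s, F i) := fun d e hde => by
  rw [cc_sum]
  exact Finset.sum_eq_zero fun i hi => h i hi d e hde

lemma Imem_mul {a b : ℕ} {f g : PowerSeries (PowerSeries K)} (hf : Imem a f) (hg : Imem b g) :
    Imem (a + b) (f * g) := by
  intro d e hde
  rw [cc_mul]
  refine Finset.sum_eq_zero fun p hp => Finset.sum_eq_zero fun q hq => ?_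
  rw [Finset.HasAntidiagonal.mem_antidiagonal] at hp hq
  rcases lt_or_ge (p.1 + q.1) a with h | h
  · rw [hf p.1 q.1 h, zero_mul]
  · rw [hg p.2 q.2 (by omega), mul_zero]

lemma Imem_pow {f : PowerSeries (PowerSeries K)} (hf : Imem 1 f) (n : ℕ) :
    Imem n (f ^ n) := by
  induction n with
  | zero => exact Imem_zero _
  | succ m ih => rw [pow_succ]; exact Imem_mul ih hf

lemma Imem_X : Imem 1 (X : PowerSeries (PowerSeries K)) := by
  intro d e hde
  obtain ⟨rfl, rfl⟩ : d = 0 ∧ e = 0 := by omega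
  simp [cc, PowerSeries.coeff_X]

lemma Imem_T : Imem 1 (C (R := PowerSeries K) X : PowerSeries (PowerSeries K)) := by
  intro d e hde
  obtain ⟨rfl, rfl⟩ : d = 0 ∧ e = 0 := by omega
  simp [cc, PowerSeries.coeff_C, PowerSeries.coeff_X]

variable (K) in
/-- `t` as element of `K[[t]][[w]]`. -/
def TT : PowerSeries (PowerSeries K) := C (R := PowerSeries K) X

variable (K) in
def uu : PowerSeries (PowerSeries K) := Ring.inverse (1 + TT K)

variable (K) in
def FF : PowerSeries (PowerSeries K) := (TT K + X) * uu K

variable (K) in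
def GG : PowerSeries (PowerSeries K) := X * uu K

lemma isUnit_one_add_TT : IsUnit (1 + TT K) := by
  rw [PowerSeries.isUnit_iff_constantCoeff]
  rw [map_add, map_one]
  rw [show constantCoeff (R := PowerSeries K) (TT K) = (X : PowerSeries K) from by
    simp [TT]]
  rw [PowerSeries.isUnit_iff_constantCoeff]
  simp

lemma one_add_TT_mul_uu : (1 + TT K) * uu K = 1 :=
  Ring.mul_inverse_cancel _ isUnit_one_add_TT

variable (K) in
/-- truncation of an element of `K[[t]][[w]]` to a polynomial in `t, w` of bidegree `< N`. -/
def trunc2 (N : ℕ) (f : PowerSeries (PowerSeries K)) : Polynomial (Polynomial K) :=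
  ∑ n ∈ Finset.range N, ∑ m ∈ Finset.range N,
    Polynomial.monomial n (Polynomial.monomial m (cc n m f))

variable (K) in
/-- Evaluation of a polynomial in two variables at `(FF, GG)`. -/
def Ev : Polynomial (Polynomial K) →+* PowerSeries (PowerSeries K) :=
  Polynomial.eval₂RingHom
    ((Polynomial.aeval (FF K) : Polynomial K →ₐ[K] PowerSeries (PowerSeries K)) :
      Polynomial K →+* PowerSeries (PowerSeries K)) (GG K)

lemma Ev_monomial (n m : ℕ) (a : K) :
    Ev K (Polynomial.monomial n (Polynomial.monomial m a)) =
      algebraMap K (PowerSeries (PowerSeries K)) a * FF K ^ m * GG K ^ n := by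
  rw [Ev, Polynomial.coe_eval₂RingHom, Polynomial.eval₂_monomial]
  simp [Polynomial.aeval_monomial]

lemma Ev_trunc2 (N : ℕ) (f : PowerSeries (PowerSeries K)) :
    Ev K (trunc2 K N f) = ∑ n ∈ Finset.range N, ∑ m ∈ Finset.range N,
      algebraMap K (PowerSeries (PowerSeries K)) (cc n m f) * FF K ^ m * GG K ^ n := by
  rw [trunc2, map_sum]
  exact Finset.sum_congr rfl fun n _ => by
    rw [map_sum]
    exact Finset.sum_congr rfl fun m _ => Ev_monomial n m _

lemma trunc2_coeff (N n m : ℕ) (f : PowerSeries (PowerSeries K)) :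
    ((trunc2 K N f).coeff n).coeff m = if n < N ∧ m < N then cc n m f else 0 := by
  simp only [trunc2, Polynomial.finset_sum_coeff, Polynomial.coeff_monomial,
    apply_ite (fun p => Polynomial.coeff p m), Polynomial.coeff_zero,
    Finset.sum_ite_eq', Finset.mem_range]
  by_cases h1 : n < N <;> by_cases h2 : m < N <;> simp [h1, h2]

lemma Imem_FF : Imem 1 (FF K) := by
  have h := Imem_mul (a := 1) (b := 0) (Imem_add Imem_T Imem_X) (Imem_zero (uu K))
  simpa [FF, TT] using h

lemma Imem_GG : Imem 1 (GG K) := by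
  have h := Imem_mul (a := 1) (b := 0) Imem_X (Imem_zero (uu K))
  simpa [GG] using h

lemma Imem_term {N m n : ℕ} (h : N ≤ m + n) (a : K) :
    Imem N (algebraMap K (PowerSeries (PowerSeries K)) a * FF K ^ m * GG K ^ n) := by
  have h1 := Imem_mul (Imem_mul (a := 0) (Imem_zero (algebraMap K (PowerSeries (PowerSeries K)) a)) (Imem_pow Imem_FF m))
    (Imem_pow Imem_GG n)
  exact Imem_mono (by omega) h1

lemma Imem_zero_elt (n : ℕ) : Imem n (0 : PowerSeries (PowerSeries K)) := by
  intro d e _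
  simp [cc]

/-- if all low bidegree coefficients of `P` vanish then `Ev P` has order `≥ N`. -/
lemma Imem_Ev {N : ℕ} {P : Polynomial (Polynomial K)}
    (h : ∀ n m, n < N → m < N → (P.coeff n).coeff m = 0) : Imem N (Ev K P) := by
  rw [P.as_sum_support, map_sum]
  refine Imem_sum _ _ fun n _ => ?_
  rw [(P.coeff n).as_sum_support, map_sum, map_sum]
  refine Imem_sum _ _ fun m _ => ?_
  rw [Ev_monomial]
  rcases lt_or_ge n N with hn | hn
  · rcases lt_or_ge m N with hm | hm
    · rw [h n m hn hm, map_zero, zero_mul, zero_mul]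
      exact Imem_zero_elt N
    · exact Imem_term (by omega) _
  · exact Imem_term (by omega) _

lemma stab {d e N₁ N₂ : ℕ} (h1 : d + e < N₁) (h2 : N₁ ≤ N₂) (f : PowerSeries (PowerSeries K)) :
    cc d e (Ev K (trunc2 K N₂ f)) = cc d e (Ev K (trunc2 K N₁ f)) := by
  rw [Ev_trunc2, Ev_trunc2, ← Finset.sum_product', ← Finset.sum_product', cc_sum, cc_sum]
  refine (Finset.sum_subset (Finset.product_subset_product
    (Finset.range_subset_range.2 h2) (Finset.range_subset_range.2 h2)) fun p hp hp' => ?_).symm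
  simp only [Finset.mem_product, Finset.mem_range] at hp hp'
  have : N₁ ≤ p.2 + p.1 := by omega
  exact Imem_term this _ d e h1

variable (K) in
/-- the substitution `t ↦ FF`, `w ↦ GG` on `K[[t]][[w]]`, defined coefficientwise. -/
def Phi (f : PowerSeries (PowerSeries K)) : PowerSeries (PowerSeries K) :=
  PowerSeries.mk fun d => PowerSeries.mk fun e => cc d e (Ev K (trunc2 K (d + e + 1) f))

lemma cc_Phi (d e : ℕ) (f : PowerSeries (PowerSeries K)) :
    cc d e (Phi K f) = cc d e (Ev K (trunc2 K (d + e + 1) f)) := by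
  unfold cc Phi
  rw [PowerSeries.coeff_mk, PowerSeries.coeff_mk]
  rfl

lemma cc_Phi' {d e N : ℕ} (h : d + e < N) (f : PowerSeries (PowerSeries K)) :
    cc d e (Phi K f) = cc d e (Ev K (trunc2 K N f)) :=
  (cc_Phi d e f).trans (stab (by omega) h f).symm

lemma Phi_eq_of {f y : PowerSeries (PowerSeries K)}
    (h : ∀ d e, cc d e (Ev K (trunc2 K (d + e + 2) f)) = cc d e y) : Phi K f = y :=
  B_ext fun d e => (cc_Phi' (N := d + e + 2) (by omega) f).trans (h d e)

lemma cc_one (n m : ℕ) : cc n m (1 : PowerSeries (PowerSeries K)) =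
    if n = 0 ∧ m = 0 then 1 else 0 := by
  unfold cc
  rw [PowerSeries.coeff_one]
  by_cases h : n = 0 <;> simp [h, PowerSeries.coeff_one]

lemma Phi_one : Phi K 1 = 1 := by
  refine Phi_eq_of fun d e => ?_
  rw [Ev_trunc2, cc_sum]
  rw [Finset.sum_eq_single 0]
  · rw [cc_sum, Finset.sum_eq_single 0]
    · simp [cc_one]
    · intro m _ hm
      simp [cc_one, hm, show cc d e (0 : PowerSeries (PowerSeries K)) = 0 from by simp [cc]]
    · intro h; exact absurd (Finset.mem_range.2 (by omega)) h
  · intro n _ hn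
    rw [cc_sum]
    refine Finset.sum_eq_zero fun m _ => ?_
    simp [cc_one, hn, show cc d e (0 : PowerSeries (PowerSeries K)) = 0 from by simp [cc]]
  · intro h; exact absurd (Finset.mem_range.2 (by omega)) h

lemma cc_TT (n m : ℕ) : cc n m (TT K) = if n = 0 ∧ m = 1 then 1 else 0 := by
  unfold cc TT
  rw [PowerSeries.coeff_C]
  by_cases h : n = 0 <;> simp [h, PowerSeries.coeff_X]

lemma cc_X (n m : ℕ) : cc n m (X : PowerSeries (PowerSeries K)) =
    if n = 1 ∧ m = 0 then 1 else 0 := by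
  unfold cc
  rw [PowerSeries.coeff_X]
  by_cases h : n = 1 <;> simp [h, PowerSeries.coeff_one]

lemma Phi_TT : Phi K (TT K) = FF K := by
  refine Phi_eq_of fun d e => ?_
  rw [Ev_trunc2, cc_sum]
  rw [Finset.sum_eq_single 0]
  · rw [cc_sum, Finset.sum_eq_single 1]
    · simp [cc_TT]
    · intro m _ hm
      simp [cc_TT, hm, show cc d e (0 : PowerSeries (PowerSeries K)) = 0 from by simp [cc]]
    · intro h; exact absurd (Finset.mem_range.2 (by omega)) h
  · intro n _ hn
    rw [cc_sum]
    refine Finset.sum_eq_zero fun m _ => ?_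
    simp [cc_TT, hn, show cc d e (0 : PowerSeries (PowerSeries K)) = 0 from by simp [cc]]
  · intro h; exact absurd (Finset.mem_range.2 (by omega)) h

lemma Phi_X : Phi K X = GG K := by
  refine Phi_eq_of fun d e => ?_
  rw [Ev_trunc2, cc_sum]
  rw [Finset.sum_eq_single 1]
  · rw [cc_sum, Finset.sum_eq_single 0]
    · simp [cc_X]
    · intro m _ hm
      simp [cc_X, hm, show cc d e (0 : PowerSeries (PowerSeries K)) = 0 from by simp [cc]]
    · intro h; exact absurd (Finset.mem_range.2 (by omega)) h
  · intro n _ hn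
    rw [cc_sum]
    refine Finset.sum_eq_zero fun m _ => ?_
    simp [cc_X, hn, show cc d e (0 : PowerSeries (PowerSeries K)) = 0 from by simp [cc]]
  · intro h; exact absurd (Finset.mem_range.2 (by omega)) h

lemma cc_algebraMap (a : K) (n m : ℕ) :
    cc n m (algebraMap K (PowerSeries (PowerSeries K)) a) =
      if n = 0 ∧ m = 0 then a else 0 := by
  unfold cc
  rw [PowerSeries.algebraMap_apply, PowerSeries.coeff_C]
  by_cases h : n = 0 <;>
    simp [h, PowerSeries.algebraMap_apply, PowerSeries.coeff_C, Algebra.algebraMap_self]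

lemma Phi_algebraMap (a : K) :
    Phi K (algebraMap K (PowerSeries (PowerSeries K)) a) =
      algebraMap K (PowerSeries (PowerSeries K)) a := by
  refine Phi_eq_of fun d e => ?_
  rw [Ev_trunc2, cc_sum]
  rw [Finset.sum_eq_single 0]
  · rw [cc_sum, Finset.sum_eq_single 0]
    · simp [cc_algebraMap]
    · intro m _ hm
      simp [cc_algebraMap, hm, show cc d e (0 : PowerSeries (PowerSeries K)) = 0 from by simp [cc]]
    · intro h; exact absurd (Finset.mem_range.2 (by omega)) h
  · intro n _ hn
    rw [cc_sum]
    refine Finset.sum_eq_zero fun m _ => ?_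
    simp [cc_algebraMap, hn, show cc d e (0 : PowerSeries (PowerSeries K)) = 0 from by simp [cc]]
  · intro h; exact absurd (Finset.mem_range.2 (by omega)) h

lemma trunc2_add (N : ℕ) (f g : PowerSeries (PowerSeries K)) :
    trunc2 K N (f + g) = trunc2 K N f + trunc2 K N g := by
  unfold trunc2
  rw [← Finset.sum_add_distrib]
  refine Finset.sum_congr rfl fun n _ => ?_
  rw [← Finset.sum_add_distrib]
  refine Finset.sum_congr rfl fun m _ => ?_
  rw [cc_add, map_add, map_add]

lemma Phi_add (f g : PowerSeries (PowerSeries K)) :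
    Phi K (f + g) = Phi K f + Phi K g :=
  B_ext fun d e => by
    rw [cc_Phi, cc_add, cc_Phi, cc_Phi, trunc2_add, map_add, cc_add]

lemma cc_mul_congr {d e : ℕ} {x x' y y' : PowerSeries (PowerSeries K)}
    (h1 : ∀ d' e', d' + e' ≤ d + e → cc d' e' x = cc d' e' x')
    (h2 : ∀ d' e', d' + e' ≤ d + e → cc d' e' y = cc d' e' y') :
    cc d e (x * y) = cc d e (x' * y') := by
  rw [cc_mul, cc_mul]
  refine Finset.sum_congr rfl fun p hp => Finset.sum_congr rfl fun q hq => ?_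
  rw [Finset.HasAntidiagonal.mem_antidiagonal] at hp hq
  rw [h1 p.1 q.1 (by omega), h2 p.2 q.2 (by omega)]

lemma trunc2_mul_coeff {N n m : ℕ} (hn : n < N) (hm : m < N)
    (f g : PowerSeries (PowerSeries K)) :
    (((trunc2 K N f * trunc2 K N g).coeff n).coeff m) = cc n m (f * g) := by
  rw [Polynomial.coeff_mul, Polynomial.finset_sum_coeff, cc_mul]
  refine Finset.sum_congr rfl fun p hp => ?_
  rw [Finset.HasAntidiagonal.mem_antidiagonal] at hp
  rw [Polynomial.coeff_mul]
  refine Finset.sum_congr rfl fun q hq => ?_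
  rw [Finset.HasAntidiagonal.mem_antidiagonal] at hq
  rw [trunc2_coeff, trunc2_coeff, if_pos ⟨by omega, by omega⟩, if_pos ⟨by omega, by omega⟩]

lemma Phi_mul (f g : PowerSeries (PowerSeries K)) :
    Phi K (f * g) = Phi K f * Phi K g := by
  refine B_ext fun d e => ?_
  rw [cc_Phi]
  have step1 : cc d e (Ev K (trunc2 K (d + e + 1) (f * g))) =
      cc d e (Ev K (trunc2 K (d + e + 1) f * trunc2 K (d + e + 1) g)) := by
    have hz : ∀ n m, n < d + e + 1 → m < d + e + 1 →
        (((trunc2 K (d + e + 1) (f * g) -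
          trunc2 K (d + e + 1) f * trunc2 K (d + e + 1) g).coeff n).coeff m) = 0 := by
      intro n m hn hm
      rw [Polynomial.coeff_sub, Polynomial.coeff_sub, trunc2_coeff,
        if_pos ⟨hn, hm⟩, trunc2_mul_coeff hn hm, sub_self]
    have him := Imem_Ev hz d e (by omega)
    rw [map_sub, cc_sub, sub_eq_zero] at him
    exact him
  rw [step1, map_mul]
  exact cc_mul_congr
    (fun d' e' h => (cc_Phi' (by omega) f).symm)
    (fun d' e' h => (cc_Phi' (by omega) g).symm)

variable (K) in
/-- `Phi` as a `K`-algebra homomorphism. -/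
def PhiAlg : PowerSeries (PowerSeries K) →ₐ[K] PowerSeries (PowerSeries K) where
  toFun := Phi K
  map_one' := Phi_one
  map_mul' := Phi_mul
  map_zero' := by
    show Phi K 0 = 0
    have h := Phi_add (K := K) 0 0
    rw [add_zero] at h
    exact left_eq_add.mp h
  map_add' := Phi_add
  commutes' := Phi_algebraMap


lemma two_alg (S : Type*) [CommRing S] [Algebra K S] [CharP K 2] : (2 : S) = 0 := by
  have h2 : ((2:ℕ) : K) = 0 := by exact_mod_cast CharP.cast_eq_zero K 2
  have h3 : ((2:ℕ) : S) = algebraMap K S ((2:ℕ) : K) := by rw [map_natCast]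
  rw [h2, map_zero] at h3
  exact_mod_cast h3

lemma relF_eq : relF K = X + (1 + TT K) * X ^ 2 + TT K ^ 3 := rfl

lemma Phi_relF [CharP K 2] : Phi K (relF K) = uu K ^ 3 * relF K := by
  have two : (2 : PowerSeries (PowerSeries K)) = 0 := two_alg (K := K) _
  have hkey := key_identity two (TT K) (X : PowerSeries (PowerSeries K)) (uu K)
    one_add_TT_mul_uu
  have hmap : Phi K (relF K) = GG K + (1 + FF K) * GG K ^ 2 + FF K ^ 3 := by
    calc Phi K (relF K) = PhiAlg K (X + (1 + TT K) * X ^ 2 + TT K ^ 3) := by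
          rw [relF_eq]; rfl
      _ = PhiAlg K X + (1 + PhiAlg K (TT K)) * PhiAlg K X ^ 2 + PhiAlg K (TT K) ^ 3 := by
          simp only [map_add, map_mul, map_pow, map_one]
      _ = GG K + (1 + FF K) * GG K ^ 2 + FF K ^ 3 := by
          rw [show PhiAlg K X = Phi K X from rfl, show PhiAlg K (TT K) = Phi K (TT K) from rfl,
            Phi_X, Phi_TT]
  rw [hmap, relF_eq, show GG K = X * uu K from rfl, show FF K = (TT K + X) * uu K from rfl]
  exact hkey

variable (K) in
def mkA : PowerSeries (PowerSeries K) →+* NgA K := Ideal.Quotient.mk (Ideal.span {relF K})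

lemma mk_one_add_TT : mkA K (1 + TT K) = 1 + tA K := by
  rw [map_add, map_one]; rfl

lemma mk_uu_eq : mkA K (uu K) = Ring.inverse (1 + tA K) := by
  have h1 : (1 + tA K) * mkA K (uu K) = 1 := by
    rw [← mk_one_add_TT, ← map_mul, one_add_TT_mul_uu, map_one]
  have hU : IsUnit (1 + tA K) := IsUnit.of_mul_eq_one _ h1
  have h2 := Ring.mul_inverse_cancel _ hU
  calc mkA K (uu K)
      = mkA K (uu K) * ((1 + tA K) * Ring.inverse (1 + tA K)) := by rw [h2, mul_one]
    _ = ((1 + tA K) * mkA K (uu K)) * Ring.inverse (1 + tA K) := by ring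
    _ = Ring.inverse (1 + tA K) := by rw [h1, one_mul]

lemma sigma_aux [CharP K 2] : ∀ a ∈ Ideal.span {relF K},
    ((Ideal.Quotient.mkₐ K (Ideal.span {relF K})).comp (PhiAlg K)) a = 0 := by
  intro a ha
  obtain ⟨c, hc⟩ := Ideal.mem_span_singleton.mp ha
  show mkA K (Phi K a) = 0
  rw [hc, show Phi K (relF K * c) = Phi K (relF K) * Phi K c from Phi_mul _ _,
    show Phi K (relF K) = uu K ^ 3 * relF K from Phi_relF, map_mul, map_mul]
  have hz : mkA K (relF K) = 0 := by
    rw [show mkA K (relF K) = Ideal.Quotient.mk (Ideal.span {relF K}) (relF K) from rfl]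
    apply Ideal.Quotient.eq_zero_iff_mem.2
    exact Ideal.subset_span (Set.mem_singleton _)
  rw [hz, mul_zero, zero_mul]

variable (K) in
/-- the induced endomorphism of the quotient. -/
def sigma [CharP K 2] : NgA K →ₐ[K] NgA K :=
  Ideal.Quotient.liftₐ (Ideal.span {relF K})
    ((Ideal.Quotient.mkₐ K (Ideal.span {relF K})).comp (PhiAlg K)) sigma_aux

lemma sigma_mk [CharP K 2] (a : PowerSeries (PowerSeries K)) :
    sigma K (mkA K a) = mkA K (Phi K a) := by
  show Ideal.Quotient.liftₐ (Ideal.span {relF K})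
      ((Ideal.Quotient.mkₐ K (Ideal.span {relF K})).comp (PhiAlg K)) sigma_aux
      (Ideal.Quotient.mk (Ideal.span {relF K}) a) = mkA K (Phi K a)
  rfl

lemma mkA_TT : mkA K (TT K) = tA K := rfl

lemma mkA_X : mkA K (X : PowerSeries (PowerSeries K)) = wA K := rfl

lemma sigma_tA [CharP K 2] :
    sigma K (tA K) = (tA K + wA K) * Ring.inverse (1 + tA K) := by
  rw [show tA K = mkA K (TT K) from rfl, sigma_mk, Phi_TT,
    show FF K = (TT K + X) * uu K from rfl, map_mul, map_add, mk_uu_eq, mkA_TT, mkA_X]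

lemma sigma_wA [CharP K 2] :
    sigma K (wA K) = wA K * Ring.inverse (1 + tA K) := by
  rw [show wA K = mkA K (X : PowerSeries (PowerSeries K)) from rfl, sigma_mk, Phi_X,
    show GG K = X * uu K from rfl, map_mul, mk_uu_eq, mkA_X]

lemma cc_apply (d e : ℕ) (f : PowerSeries (PowerSeries K)) :
    cc d e f = f (Finsupp.single () d) (Finsupp.single () e) := rfl

lemma cont_cc (d e : ℕ) :
    @Continuous _ _ (ps2Top K) ⊥ (fun f : PowerSeries (PowerSeries K) => cc d e f) := by
  letI : TopologicalSpace K := ⊥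
  letI : TopologicalSpace (PowerSeries K) := psTop K
  letI : TopologicalSpace (PowerSeries (PowerSeries K)) := ps2Top K
  have h1 : @Continuous _ _ (ps2Top K) (psTop K)
      (fun f : PowerSeries (PowerSeries K) => f (Finsupp.single () d)) :=
    continuous_apply _
  have h2 : @Continuous _ _ (psTop K) ⊥
      (fun g : PowerSeries K => g (Finsupp.single () e)) :=
    continuous_apply _
  exact h2.comp h1

lemma cont_into {Y : Type*} [ty : TopologicalSpace Y] (g : Y → PowerSeries (PowerSeries K))
    (h : ∀ d e, @Continuous _ _ ty ⊥ fun x => cc d e (g x)) :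
    @Continuous _ _ ty (ps2Top K) g := by
  letI : TopologicalSpace K := ⊥
  letI : TopologicalSpace (PowerSeries K) := psTop K
  letI : TopologicalSpace (PowerSeries (PowerSeries K)) := ps2Top K
  apply continuous_pi
  intro j
  apply continuous_pi
  intro j'
  have hj : Finsupp.single () (j ()) = j := (Finsupp.unique_single j).symm
  have hj' : Finsupp.single () (j' ()) = j' := (Finsupp.unique_single j').symm
  have heq : (fun x => g x j j') = fun x => cc (j ()) (j' ()) (g x) := by
    funext x
    show g x j j' = g x (Finsupp.single () (j ())) (Finsupp.single () (j' ()))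
    rw [hj, hj']
  rw [heq]
  exact h _ _

lemma cc_algebraMap_mul (d e : ℕ) (a : K) (z : PowerSeries (PowerSeries K)) :
    cc d e (algebraMap K (PowerSeries (PowerSeries K)) a * z) = a * cc d e z := by
  simp [cc, PowerSeries.algebraMap_apply, PowerSeries.coeff_C_mul]

lemma Phi_continuous : @Continuous _ _ (ps2Top K) (ps2Top K) (Phi K) := by
  letI : TopologicalSpace K := ⊥
  letI : TopologicalSpace (PowerSeries (PowerSeries K)) := ps2Top K
  haveI : DiscreteTopology K := ⟨rfl⟩
  haveI : ContinuousAdd K := ⟨continuous_of_discreteTopology⟩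
  haveI : ContinuousMul K := ⟨continuous_of_discreteTopology⟩
  refine cont_into _ fun d e => ?_
  have hfun : (fun f : PowerSeries (PowerSeries K) => cc d e (Phi K f)) = fun f =>
      ∑ n ∈ Finset.range (d+e+1), ∑ m ∈ Finset.range (d+e+1),
        cc n m f * cc d e (FF K ^ m * GG K ^ n) := by
    funext f
    rw [cc_Phi, Ev_trunc2, cc_sum]
    refine Finset.sum_congr rfl fun n _ => ?_
    rw [cc_sum]
    refine Finset.sum_congr rfl fun m _ => ?_
    rw [mul_assoc, cc_algebraMap_mul, mul_comm]
  rw [hfun]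
  refine continuous_finset_sum _ fun n _ => continuous_finset_sum _ fun m _ => ?_
  exact (cont_cc n m).mul continuous_const

lemma mk_continuous :
    @Continuous _ _ (ps2Top K) (aTop K)
      (fun a : PowerSeries (PowerSeries K) => mkA K a) :=
  continuous_coinduced_rng

lemma sigma_continuous [CharP K 2] :
    @Continuous _ _ (aTop K) (aTop K) (sigma K) := by
  letI : TopologicalSpace (PowerSeries (PowerSeries K)) := ps2Top K
  letI : TopologicalSpace (NgA K) := aTop K
  rw [show aTop K =
    TopologicalSpace.coinduced (Ideal.Quotient.mk (Ideal.span {relF K})) (ps2Top K) from rfl]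
  refine continuous_coinduced_dom.2 ?_
  have heq : (⇑(sigma K) ∘ (Ideal.Quotient.mk (Ideal.span {relF K}))) =
      (fun a : PowerSeries (PowerSeries K) => mkA K a) ∘ (Phi K) :=
    funext fun a => sigma_mk a
  rw [heq]
  exact Continuous.comp mk_continuous Phi_continuous

end Aux

/-- for `k` of characteristic 2 and `A = k[[t,w]]/(w + (1+t)w² + t³)`, the
assignments `σ(t) = (t+w)/(1+t)`, `σ(w) = w/(1+t)` define a continuous `k`-algebra
endomorphism of `A`; i.e. the relation `w + (1+t)w² + t³`, evaluated at these images,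
is zero in `A`, and there is a continuous `k`-algebra endomorphism realizing them. -/
theorem NgA_sigma_welldefined [CharP k 2] :
    letI := aTop k
    (wA k * Ring.inverse (1 + tA k) +
        (1 + (tA k + wA k) * Ring.inverse (1 + tA k)) *
          (wA k * Ring.inverse (1 + tA k)) ^ 2 +
        ((tA k + wA k) * Ring.inverse (1 + tA k)) ^ 3 = 0) ∧
      ∃ σ : NgA k →ₐ[k] NgA k, Continuous σ ∧
        σ (tA k) = (tA k + wA k) * Ring.inverse (1 + tA k) ∧
        σ (wA k) = wA k * Ring.inverse (1 + tA k) := by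
  refine ⟨?_, ?_⟩
  · have two : (2 : NgA k) = 0 := two_alg (K := k) _
    have h1 : (1 + tA k) * mkA k (uu k) = 1 := by
      rw [← mk_one_add_TT, ← map_mul, one_add_TT_mul_uu, map_one]
    have hU : IsUnit (1 + tA k) := IsUnit.of_mul_eq_one _ h1
    have hu : (1 + tA k) * Ring.inverse (1 + tA k) = 1 := Ring.mul_inverse_cancel _ hU
    have hrel : wA k + (1 + tA k) * wA k ^ 2 + tA k ^ 3 = 0 := by
      have h0 : mkA k (relF k) = 0 := by
        rw [show mkA k (relF k) = Ideal.Quotient.mk (Ideal.span {relF k}) (relF k) from rfl]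
        apply Ideal.Quotient.eq_zero_iff_mem.2
        exact Ideal.subset_span (Set.mem_singleton _)
      simp only [relF_eq, map_add, map_mul, map_pow, map_one, mkA_TT, mkA_X] at h0
      exact h0
    have hmain := key_identity two (tA k) (wA k) (Ring.inverse (1 + tA k)) hu
    rw [hrel, mul_zero] at hmain
    exact hmain
  · exact ⟨sigma k, sigma_continuous, sigma_tA, sigma_wA⟩
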